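/- (Discrete Poisson kernel for the square) Let N ≥ 1 be an integer and let n₁ be an integer with |n₁| ≤ N−1. For k = 1, …, 2N−1 let a_k be the unique positive real number with cosh(a_k) = 2 − cos(kπ/(2N)). Define F(n,m) := (1/N) · Σ_{k=1}^{2N−1} sin(πk(n+N)/(2N)) · sin(πk(n₁+N)/(2N)) · sinh(a_k(m+N)) / sinh(2a_kN). Then F is discrete harmonic on Q_N (the mean value equation holds at all (n,m) with |n|, |m| ≤ N−1), F(−N,m) = F(N,m) = 0 for all |m| ≤ N, F(n,−N) = 0 for all |n| ≤ N, F(n₁,N) = 1, and F(n,N) = 0 for every integer n ≠ n₁ with |n| < N. -/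

import Mathlib

open Real

lemma exp_ne_one' (M : ℕ) (hM : 0 < M) (r : ℤ) (hr : ¬ ((2*(M:ℤ)) ∣ r)) :
    Complex.exp ((↑(π * r / M) : ℂ) * Complex.I) ≠ 1 := by
  intro h
  rw [Complex.exp_eq_one_iff] at h
  obtain ⟨j, hj⟩ := h
  apply hr
  have hj' : ((π * r / M : ℝ) : ℂ) * Complex.I = ((j * (2*π) : ℝ) : ℂ) * Complex.I := by
    rw [hj]; push_cast; ring
  have h2 : (π * r / M : ℝ) = j * (2*π) := by
    exact_mod_cast mul_right_cancel₀ Complex.I_ne_zero hj'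
  have hM' : (M:ℝ) ≠ 0 := by positivity
  have h3 : (r : ℝ) = ((2 * M * j : ℤ) : ℝ) := by
    have hπ := Real.pi_ne_zero
    field_simp at h2
    push_cast
    have h4 : π * (r:ℝ) = π * (2*(M:ℝ)*j) := by linear_combination π * h2
    have := mul_left_cancel₀ hπ h4
    linarith
  exact ⟨j, by exact_mod_cast h3⟩

lemma cos_sum (M : ℕ) (hM : 0 < M) (r : ℤ) (hr : ¬ ((2*(M:ℤ)) ∣ r)) :
    ∑ k ∈ Finset.range M, Real.cos (π * k * r / M) = if Even r then 0 else 1 := by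
  set θ : ℝ := π * r / M with hθ
  set z : ℂ := Complex.exp ((θ:ℂ) * Complex.I) with hz
  have hz1 : z ≠ 1 := exp_ne_one' M hM r hr
  have hre : ∀ k : ℕ, Real.cos (π * k * r / M) = (z ^ k).re := by
    intro k
    rw [hz, ← Complex.exp_nat_mul]
    have h4 : (k:ℂ) * ((θ:ℂ) * Complex.I) = ((k * θ : ℝ) : ℂ) * Complex.I := by push_cast; ring
    rw [h4, Complex.exp_ofReal_mul_I_re]
    congr 1; rw [hθ]; ring
  simp_rw [hre]
  rw [← Complex.re_sum, geom_sum_eq hz1]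
  have hzM : z ^ M = (-1 : ℂ) ^ r := by
    rw [hz, ← Complex.exp_nat_mul]
    have h5 : (M:ℂ) * ((θ:ℂ) * Complex.I) = r * (π * Complex.I) := by
      rw [hθ]
      have hM' : (M:ℂ) ≠ 0 := by exact_mod_cast Nat.cast_ne_zero.mpr hM.ne'
      push_cast
      field_simp
    rw [h5, Complex.exp_int_mul, Complex.exp_pi_mul_I]
  rw [hzM]
  have hcos : z.re = Real.cos θ := Complex.exp_ofReal_mul_I_re θ
  have hsin : z.im = Real.sin θ := Complex.exp_ofReal_mul_I_im θ
  have hns : Complex.normSq (z - 1) = 2 - 2 * Real.cos θ := by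
    rw [Complex.normSq_apply]
    simp only [Complex.sub_re, Complex.sub_im, Complex.one_re, Complex.one_im, hcos, hsin]
    nlinarith [Real.sin_sq_add_cos_sq θ]
  have hne : Complex.normSq (z - 1) ≠ 0 := by
    simpa [sub_eq_zero] using hz1
  rcases Int.even_or_odd r with he | ho
  · rw [if_pos he, he.neg_one_zpow]
    simp
  · rw [if_neg (Int.not_even_iff_odd.mpr ho), ho.neg_one_zpow]
    rw [Complex.div_re]
    simp only [Complex.sub_re, Complex.sub_im, Complex.one_re, Complex.one_im, hcos, hsin, hns]
    norm_num
    have : 2 - 2 * Real.cos θ ≠ 0 := by rw [← hns]; exact hne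
    have h1 : 1 - Real.cos θ ≠ 0 := by intro h; apply this; linarith
    rw [div_eq_one_iff_eq this]
    ring

lemma cos_sum_zero (M : ℕ) :
    ∑ k ∈ Finset.range M, Real.cos (π * k * (0:ℤ) / M) = M := by
  simp

lemma not_dvd' (M r : ℤ) (hM : 0 < M) (h0 : r ≠ 0) (hlo : -(2*M) < r) (hhi : r < 2*M) :
    ¬ ((2*M) ∣ r) := by
  rintro ⟨c, hc⟩
  rcases lt_trichotomy c 0 with h1|h1|h1
  · have hc1 : c ≤ -1 := by omega
    nlinarith
  · subst h1; simp at hc; exact h0 hc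
  · have hc1 : 1 ≤ c := h1
    nlinarith

lemma sin_orth (N : ℕ) (hN : 1 ≤ N) (p q : ℤ) (hp1 : 1 ≤ p) (hp2 : p ≤ 2*(N:ℤ) - 1)
    (hq1 : 1 ≤ q) (hq2 : q ≤ 2*(N:ℤ) - 1) :
    ∑ k ∈ Finset.Icc 1 (2*N - 1),
      Real.sin (π * k * (p:ℝ) / (2*N)) * Real.sin (π * k * (q:ℝ) / (2*N)) =
      if p = q then (N:ℝ) else 0 := by
  have hNR : (0:ℝ) < (N:ℝ) := by exact_mod_cast hN
  have hins : Finset.range (2*N) = insert 0 (Finset.Icc 1 (2*N-1)) := by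
    ext k; simp only [Finset.mem_range, Finset.mem_insert, Finset.mem_Icc]; omega
  have h0 : (0:ℕ) ∉ Finset.Icc 1 (2*N-1) := by simp
  have hsum : ∑ k ∈ Finset.Icc 1 (2*N - 1),
      Real.sin (π * k * (p:ℝ) / (2*N)) * Real.sin (π * k * (q:ℝ) / (2*N))
      = ∑ k ∈ Finset.range (2*N),
      Real.sin (π * k * (p:ℝ) / (2*N)) * Real.sin (π * k * (q:ℝ) / (2*N)) := by
    rw [hins, Finset.sum_insert h0]; simp
  rw [hsum]
  have hterm : ∀ k : ℕ,
      Real.sin (π * k * (p:ℝ) / (2*N)) * Real.sin (π * k * (q:ℝ) / (2*N))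
      = (Real.cos (π * k * ((p - q : ℤ):ℝ) / (2*N)) - Real.cos (π * k * ((p + q : ℤ):ℝ) / (2*N))) / 2 := by
    intro k
    have e1 : π * k * ((p - q : ℤ):ℝ) / (2*N)
        = π * k * (p:ℝ) / (2*N) - π * k * (q:ℝ) / (2*N) := by push_cast; ring
    have e2 : π * k * ((p + q : ℤ):ℝ) / (2*N)
        = π * k * (p:ℝ) / (2*N) + π * k * (q:ℝ) / (2*N) := by push_cast; ring
    rw [e1, e2, Real.cos_sub, Real.cos_add]; ring
  simp_rw [hterm]
  rw [← Finset.sum_div, Finset.sum_sub_distrib]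
  have hcast : ((2*N : ℕ) : ℝ) = 2 * (N:ℝ) := by push_cast; ring
  by_cases hpq : p = q
  · subst hpq
    rw [if_pos rfl]
    have c1 : ∑ k ∈ Finset.range (2*N), Real.cos (π * k * ((p - p : ℤ):ℝ) / (2*N))
        = ((2*N : ℕ) : ℝ) := by
      rw [show ((p - p : ℤ)) = (0:ℤ) by ring]
      rw [show (2 * (N:ℝ)) = ((2*N : ℕ):ℝ) by push_cast; ring]
      rw [cos_sum_zero]
    have c2 : ∑ k ∈ Finset.range (2*N), Real.cos (π * k * ((p + p : ℤ):ℝ) / (2*N))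
        = 0 := by
      rw [show (2 * (N:ℝ)) = ((2*N : ℕ):ℝ) by push_cast; ring]
      rw [cos_sum (2*N) (by omega) (p+p) (by
        have hcast2 : ((2*N:ℕ):ℤ) = 2*(N:ℤ) := by push_cast; ring
        rw [hcast2]
        exact not_dvd' _ _ (by omega) (by omega) (by omega) (by omega))]
      rw [if_pos ⟨p, by ring⟩]
    rw [c1, c2]
    push_cast; ring
  · rw [if_neg hpq]
    rw [show (2 * (N:ℝ)) = ((2*N : ℕ):ℝ) by push_cast; ring]
    have hcast2 : ((2*N:ℕ):ℤ) = 2*(N:ℤ) := by push_cast; ring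
    rw [cos_sum (2*N) (by omega) (p-q) (by
          rw [hcast2]; exact not_dvd' _ _ (by omega) (by omega) (by omega) (by omega)),
        cos_sum (2*N) (by omega) (p+q) (by
          rw [hcast2]; exact not_dvd' _ _ (by omega) (by omega) (by omega) (by omega))]
    have hpar : (Even (p - q)) ↔ (Even (p + q)) := by
      constructor
      · rintro ⟨c, hc⟩; exact ⟨c + q, by omega⟩
      · rintro ⟨c, hc⟩; exact ⟨c - q, by omega⟩
    by_cases he : Even (p - q)
    · rw [if_pos he, if_pos (hpar.mp he)]; ring
    · rw [if_neg he, if_neg (fun h => he (hpar.mpr h))]; ring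

/-- The discrete Poisson kernel of `Q_N` at the boundary point `(n₁, N)`:
`F(n,m) = (1/N) Σ_{k=1}^{2N-1} sin(πk(n+N)/(2N)) sin(πk(n₁+N)/(2N)) sinh(a_k(m+N))/sinh(2a_kN)`. -/
noncomputable def discretePoissonKernel (N : ℕ) (n₁ : ℤ) (a : ℕ → ℝ) (n m : ℤ) : ℝ :=
  (1 / (N : ℝ)) * ∑ k ∈ Finset.Icc 1 (2 * N - 1),
    Real.sin (Real.pi * (k : ℝ) * ((n : ℝ) + (N : ℝ)) / (2 * (N : ℝ))) *
      Real.sin (Real.pi * (k : ℝ) * ((n₁ : ℝ) + (N : ℝ)) / (2 * (N : ℝ))) *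
      (Real.sinh (a k * ((m : ℝ) + (N : ℝ))) / Real.sinh (2 * a k * (N : ℝ)))

/-- The discrete Poisson kernel for the square: it is discrete harmonic in `Q_N`,
vanishes on the three sides `{n = ±N}`, `{m = -N}`, equals `1` at `(n₁, N)` and `0` at
the other points of the top side. Here `a_k` is the unique positive solution of
`cosh a_k = 2 - cos(kπ/(2N))`. -/
theorem discrete_poisson_kernel (N : ℕ) (hN : 1 ≤ N) (n₁ : ℤ) (hn₁ : |n₁| ≤ (N : ℤ) - 1)
    (a : ℕ → ℝ)
    (ha : ∀ k : ℕ, 1 ≤ k → k ≤ 2 * N - 1 →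
      0 < a k ∧ Real.cosh (a k) = 2 - Real.cos ((k : ℝ) * Real.pi / (2 * (N : ℝ)))) :
    (∀ n m : ℤ, |n| ≤ (N : ℤ) - 1 → |m| ≤ (N : ℤ) - 1 →
        4 * discretePoissonKernel N n₁ a n m =
          discretePoissonKernel N n₁ a (n + 1) m + discretePoissonKernel N n₁ a (n - 1) m +
            discretePoissonKernel N n₁ a n (m + 1) + discretePoissonKernel N n₁ a n (m - 1)) ∧
      (∀ m : ℤ, |m| ≤ (N : ℤ) →
        discretePoissonKernel N n₁ a (-(N : ℤ)) m = 0 ∧ discretePoissonKernel N n₁ a (N : ℤ) m = 0) ∧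
      (∀ n : ℤ, |n| ≤ (N : ℤ) → discretePoissonKernel N n₁ a n (-(N : ℤ)) = 0) ∧
      discretePoissonKernel N n₁ a n₁ (N : ℤ) = 1 ∧
      (∀ n : ℤ, |n| < (N : ℤ) → n ≠ n₁ → discretePoissonKernel N n₁ a n (N : ℤ) = 0) := by
  have hNR : (0:ℝ) < (N:ℝ) := by exact_mod_cast hN
  have hNne : (N:ℝ) ≠ 0 := hNR.ne'
  obtain ⟨hn₁L, hn₁R⟩ := abs_le.mp hn₁
  -- the top-side computation, used twice
  have htop : ∀ n : ℤ, 1 ≤ n + (N:ℤ) → n + (N:ℤ) ≤ 2*(N:ℤ) - 1 →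
      discretePoissonKernel N n₁ a n (N : ℤ) =
        (1 / (N:ℝ)) * (if n + (N:ℤ) = n₁ + (N:ℤ) then (N:ℝ) else 0) := by
    intro n hn1 hn2
    unfold discretePoissonKernel
    congr 1
    rw [← sin_orth N hN (n + N) (n₁ + N) hn1 hn2 (by omega) (by omega)]
    apply Finset.sum_congr rfl
    intro k hk
    rw [Finset.mem_Icc] at hk
    obtain ⟨hak, _⟩ := ha k hk.1 hk.2
    have h1 : a k * (((N:ℤ):ℝ) + (N:ℝ)) = 2 * a k * (N:ℝ) := by push_cast; ring
    rw [h1, div_self (by positivity : Real.sinh (2 * a k * (N:ℝ)) ≠ 0)]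
    rw [mul_one]
    congr 2 <;> push_cast <;> ring
  refine ⟨?_, ?_, ?_, ?_, ?_⟩
  · -- harmonicity
    intro n m hn hm
    unfold discretePoissonKernel
    simp only [Finset.mul_sum]
    rw [← Finset.sum_add_distrib, ← Finset.sum_add_distrib, ← Finset.sum_add_distrib]
    apply Finset.sum_congr rfl
    intro k hk
    rw [Finset.mem_Icc] at hk
    obtain ⟨hak, hck⟩ := ha k hk.1 hk.2
    have e1 : π * (k:ℝ) * (((n+1 : ℤ):ℝ) + (N:ℝ)) / (2 * (N:ℝ))
        = π * (k:ℝ) * (((n:ℤ):ℝ) + (N:ℝ)) / (2 * (N:ℝ)) + π * (k:ℝ) / (2 * (N:ℝ)) := by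
      push_cast; ring
    have e2 : π * (k:ℝ) * (((n-1 : ℤ):ℝ) + (N:ℝ)) / (2 * (N:ℝ))
        = π * (k:ℝ) * (((n:ℤ):ℝ) + (N:ℝ)) / (2 * (N:ℝ)) - π * (k:ℝ) / (2 * (N:ℝ)) := by
      push_cast; ring
    have e3 : a k * (((m+1 : ℤ):ℝ) + (N:ℝ)) = a k * (((m:ℤ):ℝ) + (N:ℝ)) + a k := by
      push_cast; ring
    have e4 : a k * (((m-1 : ℤ):ℝ) + (N:ℝ)) = a k * (((m:ℤ):ℝ) + (N:ℝ)) - a k := by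
      push_cast; ring
    rw [e1, e2, e3, e4, Real.sin_add, Real.sin_sub, Real.sinh_add, Real.sinh_sub]
    have hck' : Real.cosh (a k) = 2 - Real.cos (π * (k:ℝ) / (2 * (N:ℝ))) := by
      rw [hck]; congr 1; ring
    rw [hck']
    ring_nf
  · -- sides n = ±N
    intro m hm
    constructor
    · unfold discretePoissonKernel
      rw [Finset.sum_eq_zero, mul_zero]
      intro k hk
      have : ((-(N:ℤ) : ℤ):ℝ) + (N:ℝ) = 0 := by push_cast; ring
      rw [this]
      simp
    · unfold discretePoissonKernel
      rw [Finset.sum_eq_zero, mul_zero]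
      intro k hk
      have : π * (k:ℝ) * ((((N:ℤ)) : ℝ) + (N:ℝ)) / (2 * (N:ℝ)) = (k:ℝ) * π := by
        push_cast; field_simp; ring
      rw [this, Real.sin_nat_mul_pi, zero_mul, zero_mul]
  · -- bottom side
    intro n hn
    unfold discretePoissonKernel
    rw [Finset.sum_eq_zero, mul_zero]
    intro k hk
    have : a k * (((-(N:ℤ) : ℤ):ℝ) + (N:ℝ)) = 0 := by push_cast; ring
    rw [this]
    simp
  · -- value 1 at (n₁, N)
    rw [htop n₁ (by omega) (by omega), if_pos rfl]
    field_simp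
  · -- value 0 elsewhere on top
    intro n hn hne
    obtain ⟨hnL, hnR⟩ := abs_lt.mp hn
    rw [htop n (by omega) (by omega), if_neg (by omega)]
    simp
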